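/- Let H be a finite simple graph whose shortest odd cycle has length ℓ (the odd-girth of H is ℓ), and let G be a cycle of length ℓ. Then the image of G under any graph homomorphism from G to H is a cycle of length ℓ in H. -/

import Mathlib

open SimpleGraph
open Fin.NatCast Fin.CommRing

/-- Any closed walk of odd length contains an odd cycle of length at most the walk's length. -/
lemma aux_exists_odd_cycle {V : Type*} {G : SimpleGraph V} :
    ∀ (n : ℕ) (u : V) (p : G.Walk u u), p.length = n → Odd n →
      ∃ (v : V) (c : G.Walk v v), c.IsCycle ∧ Odd c.length ∧ c.length ≤ n := by
  classical
  intro n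
  induction n using Nat.strong_induction_on with
  | _ n ih =>
  intro u p hlen hoddn
  cases p with
  | nil => simp at hlen; subst hlen; simp [Nat.odd_iff] at hoddn
  | @cons _ v _ h q =>
    by_cases hnd : q.support.Nodup
    · refine ⟨u, Walk.cons h q, ?_, ?_, le_of_eq hlen⟩
      · rw [Walk.cons_isCycle_iff]
        refine ⟨(Walk.isPath_def q).mpr hnd, ?_⟩
        intro he
        cases q with
        | nil => exact h.ne rfl
        | @cons _ y _ h2 q2 =>
          rw [Walk.edges_cons, List.mem_cons] at he
          rw [Walk.support_cons, List.nodup_cons] at hnd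
          rcases he with he | he
          · have hy : u = y := by
              rw [Sym2.eq_iff] at he
              rcases he with ⟨h1, h2⟩ | ⟨h1, h2⟩
              · exact absurd h1 h.ne
              · exact h1
            subst hy
            cases q2 with
            | nil =>
              simp [Walk.length_cons] at hlen
              subst hlen
              simp [Nat.odd_iff] at hoddn
            | cons h3 q3 =>
              have hu : u ∈ (Walk.cons h3 q3).support.tail := by
                rw [Walk.support_cons]
                simpa using Walk.end_mem_support q3
              have : ¬ (Walk.cons h3 q3).support.Nodup := by
                rw [Walk.support_cons, List.nodup_cons]
                intro ⟨hn1, _⟩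
                exact hn1 hu
              exact this hnd.2
          · exact hnd.1 (Walk.snd_mem_support_of_mem_edges q2 he)
      · rw [hlen]; exact hoddn
    · obtain ⟨x, hxdup⟩ := List.exists_duplicate_iff_not_nodup.mpr hnd
      have hx : x ∈ q.support := hxdup.mem
      have hcount : 2 ≤ q.support.count x := List.duplicate_iff_two_le_count.mp hxdup
      set t := q.takeUntil x hx with ht
      set d := q.dropUntil x hx with hd
      have hspec : t.append d = q := q.take_spec hx
      have hcountt : t.support.count x = 1 := q.count_support_takeUntil_eq_one hx
      have hxd : x ∈ d.support.tail := by
        have : q.support.count x = t.support.count x + d.support.tail.count x := by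
          rw [← hspec, Walk.support_append, List.count_append]
        rw [this, hcountt] at hcount
        exact List.count_pos_iff.mp (by omega)
      have hq : t.length + d.length = q.length := by
        rw [← hspec, Walk.length_append]
      cases hdd : d with
      | nil => rw [hdd] at hxd; simp [Walk.support_nil] at hxd
      | @cons _ y _ h2 d' =>
        rw [hdd] at hxd
        rw [Walk.support_cons] at hxd
        simp only [List.tail_cons] at hxd
        set t2 := d'.takeUntil x hxd with ht2
        set d2 := d'.dropUntil x hxd with hd2
        have hspec2 : t2.append d2 = d' := d'.take_spec hxd
        have hd' : t2.length + d2.length = d'.length := by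
          rw [← hspec2, Walk.length_append]
        have hdl : d.length = d'.length + 1 := by rw [hdd, Walk.length_cons]
        have hn : q.length + 1 = n := by simpa [Walk.length_cons] using hlen
        set c1 : G.Walk x x := Walk.cons h2 t2 with hc1
        set c2 : G.Walk x x := d2.append (Walk.cons h t) with hc2
        have hl1 : c1.length = 1 + t2.length := by
          rw [hc1, Walk.length_cons]; omega
        have hl2 : c2.length = d2.length + (1 + t.length) := by
          rw [hc2, Walk.length_append, Walk.length_cons]; omega
        have hsum : c1.length + c2.length = n := by omega
        have hno : n % 2 = 1 := Nat.odd_iff.mp hoddn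
        have hdisj : c1.length % 2 = 1 ∨ c2.length % 2 = 1 := by omega
        rcases hdisj with hodd1 | hodd1
        · have hlt : c1.length < n := by omega
          obtain ⟨v', c, hc, hco, hcle⟩ := ih c1.length hlt x c1 rfl (Nat.odd_iff.mpr hodd1)
          exact ⟨v', c, hc, hco, hcle.trans hlt.le⟩
        · have hlt : c2.length < n := by omega
          obtain ⟨v', c, hc, hco, hcle⟩ := ih c2.length hlt x c2 rfl (Nat.odd_iff.mpr hodd1)
          exact ⟨v', c, hc, hco, hcle.trans hlt.le⟩

lemma aux_cg_adj {ℓ : ℕ} [NeZero ℓ] (hℓ : 3 ≤ ℓ) (a : ℕ) (ha : a < ℓ) :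
    (cycleGraph ℓ).Adj ↑a ↑(a + 1) := by
  rw [cycleGraph_adj']
  right
  have h1 : (↑(a + 1) : Fin ℓ) - ↑a = 1 := by push_cast; ring
  rw [h1]
  show ((1 : ℕ) : Fin ℓ).val = 1
  rw [Fin.val_natCast]
  exact Nat.mod_eq_of_lt (by omega)

/-- The standard spanning walk of the cycle graph, from `ℓ - m` up to `ℓ ≡ 0`. -/
def auxWAux (ℓ : ℕ) [NeZero ℓ] (hℓ : 3 ≤ ℓ) : (m : ℕ) → m ≤ ℓ → (cycleGraph ℓ).Walk (↑(ℓ - m)) 0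
  | 0, _ => (Walk.nil).copy (by simp) rfl
  | m + 1, hm => Walk.cons
      (by
        have h1 : ℓ - m = (ℓ - (m + 1)) + 1 := by omega
        rw [h1]
        exact aux_cg_adj hℓ _ (by omega))
      (auxWAux ℓ hℓ m (by omega))

lemma auxWAux_length (ℓ : ℕ) [NeZero ℓ] (hℓ : 3 ≤ ℓ) :
    ∀ (m : ℕ) (hm : m ≤ ℓ), (auxWAux ℓ hℓ m hm).length = m
  | 0, _ => by simp [auxWAux]
  | m + 1, hm => by simp [auxWAux, auxWAux_length ℓ hℓ m (by omega)]

lemma auxWAux_support (ℓ : ℕ) [NeZero ℓ] (hℓ : 3 ≤ ℓ) :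
    ∀ (m : ℕ) (hm : m ≤ ℓ), (auxWAux ℓ hℓ m hm).support
      = (List.range (m + 1)).map (fun i => ((ℓ - m + i : ℕ) : Fin ℓ))
  | 0, _ => by simp [auxWAux, List.range_succ]
  | m + 1, hm => by
      rw [auxWAux, Walk.support_cons, auxWAux_support ℓ hℓ m (by omega)]
      rw [List.range_succ_eq_map (n := m + 1), List.map_cons, List.map_map, Nat.add_zero]
      congr 1
      apply List.map_congr_left
      intro i _
      simp only [Function.comp_apply]
      congr 1
      omega

lemma auxWAux_edges (ℓ : ℕ) [NeZero ℓ] (hℓ : 3 ≤ ℓ) :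
    ∀ (m : ℕ) (hm : m ≤ ℓ), (auxWAux ℓ hℓ m hm).edges
      = (List.range m).map (fun i => s(((ℓ - m + i : ℕ) : Fin ℓ), ((ℓ - m + i + 1 : ℕ) : Fin ℓ)))
  | 0, _ => by simp [auxWAux]
  | m + 1, hm => by
      rw [auxWAux, Walk.edges_cons, auxWAux_edges ℓ hℓ m (by omega)]
      rw [List.range_succ_eq_map (n := m), List.map_cons, List.map_map, Nat.add_zero]
      have h1 : ℓ - (m + 1) + 1 = ℓ - m := by omega
      rw [h1]
      congr 1
      apply List.map_congr_left
      intro i _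
      simp only [Function.comp_apply]
      have h2 : ℓ - (m + 1) + Nat.succ i = ℓ - m + i := by omega
      rw [h2]

lemma aux_nat_mod_inj {ℓ a b : ℕ} (ha1 : 1 ≤ a) (ha2 : a ≤ ℓ) (hb1 : 1 ≤ b) (hb2 : b ≤ ℓ)
    (h : a % ℓ = b % ℓ) : a = b := by
  rcases eq_or_lt_of_le ha2 with rfl | ha
  · rcases eq_or_lt_of_le hb2 with rfl | hb
    · rfl
    · rw [Nat.mod_self, Nat.mod_eq_of_lt hb] at h; omega
  · rcases eq_or_lt_of_le hb2 with rfl | hb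
    · rw [Nat.mod_self, Nat.mod_eq_of_lt ha] at h; omega
    · rw [Nat.mod_eq_of_lt ha, Nat.mod_eq_of_lt hb] at h; exact h

lemma aux_nat_mod_edge {ℓ i j : ℕ} (hℓ : 3 ≤ ℓ) (hi : i < ℓ) (hj : j < ℓ)
    (h1 : i % ℓ = (j + 1) % ℓ) (h2 : (i + 1) % ℓ = j % ℓ) : False := by
  rw [Nat.mod_eq_of_lt hi] at h1
  rw [Nat.mod_eq_of_lt hj] at h2
  rcases eq_or_lt_of_le (show j + 1 ≤ ℓ by omega) with hje | hjl
  · rw [← hje, Nat.mod_self] at h1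
    subst h1
    rw [Nat.mod_eq_of_lt (by omega)] at h2
    omega
  · rw [Nat.mod_eq_of_lt hjl] at h1
    subst h1
    rcases eq_or_lt_of_le (show j + 1 + 1 ≤ ℓ by omega) with hje2 | hjl2
    · rw [← hje2, Nat.mod_self] at h2; omega
    · rw [Nat.mod_eq_of_lt hjl2] at h2; omega

/-- If the odd-girth of `H` is `ℓ`, the image of an `ℓ`-cycle under any
homomorphism to `H` is an `ℓ`-cycle of `H`. -/
theorem stmt_7 {V : Type*} [Fintype V] (H : SimpleGraph V) {ℓ : ℕ}
    (hodd : Odd ℓ)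
    (hex : ∃ (u : V) (c : H.Walk u u), c.IsCycle ∧ c.length = ℓ)
    (hmin : ∀ (u : V) (c : H.Walk u u), c.IsCycle → Odd c.length → ℓ ≤ c.length)
    (σ : SimpleGraph.cycleGraph ℓ →g H) :
    ∃ (u : V) (c : H.Walk u u), c.IsCycle ∧ c.length = ℓ ∧
      c.toSubgraph = SimpleGraph.Subgraph.map σ ⊤ := by
  classical
  obtain ⟨u0, c0, hc0, hc0len⟩ := hex
  have hℓ3 : 3 ≤ ℓ := hc0len ▸ hc0.three_le_length
  haveI : NeZero ℓ := ⟨by omega⟩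
  set W : (cycleGraph ℓ).Walk 0 0 := (auxWAux ℓ hℓ3 ℓ le_rfl).copy (by simp) rfl with hW
  have hWlen : W.length = ℓ := by
    rw [hW, Walk.length_copy, auxWAux_length]
  have hsup : W.support = (List.range (ℓ + 1)).map (fun i => ((i : ℕ) : Fin ℓ)) := by
    rw [hW, Walk.support_copy, auxWAux_support]
    apply List.map_congr_left
    intro i _
    congr 1
    omega
  have hedges : W.edges = (List.range ℓ).map
      (fun i => s(((i : ℕ) : Fin ℓ), ((i + 1 : ℕ) : Fin ℓ))) := by
    rw [hW, Walk.edges_copy, auxWAux_edges]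
    apply List.map_congr_left
    intro i _
    congr 2 <;> [congr 1; congr 1] <;> omega
  have hall : ∀ v : Fin ℓ, v ∈ W.support := by
    intro v
    rw [hsup, List.mem_map]
    exact ⟨v.val, List.mem_range.mpr (by omega), Fin.cast_val_eq_self v⟩
  -- W is a cycle
  have hWcyc : W.IsCycle := by
    rw [Walk.isCycle_def]
    refine ⟨?_, ?_, ?_⟩
    · rw [Walk.isTrail_def, hedges]
      apply List.Nodup.map_on _ List.nodup_range
      intro i hi j hj hs
      rw [List.mem_range] at hi hj
      rw [Sym2.eq_iff] at hs
      rcases hs with ⟨h1, _⟩ | ⟨h1, h2⟩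
      · have := congrArg Fin.val h1
        rw [Fin.val_natCast, Fin.val_natCast, Nat.mod_eq_of_lt hi, Nat.mod_eq_of_lt hj] at this
        exact this
      · exfalso
        have hv1 := congrArg Fin.val h1
        have hv2 := congrArg Fin.val h2
        rw [Fin.val_natCast, Fin.val_natCast] at hv1 hv2
        exact aux_nat_mod_edge hℓ3 hi hj hv1 hv2
    · intro hnil
      have := congrArg Walk.length hnil
      rw [hWlen] at this
      simp at this
      omega
    · rw [hsup, List.range_succ_eq_map, List.map_cons, List.tail_cons, List.map_map]
      apply List.Nodup.map_on _ List.nodup_range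
      intro i hi j hj hs
      rw [List.mem_range] at hi hj
      simp only [Function.comp_apply] at hs
      have := congrArg Fin.val hs
      rw [Fin.val_natCast, Fin.val_natCast] at this
      have := aux_nat_mod_inj (by omega) (by omega) (by omega) (by omega) this
      omega
  -- W.toSubgraph = ⊤
  have hWtop : W.toSubgraph = ⊤ := by
    apply Subgraph.ext
    · rw [Walk.verts_toSubgraph]
      ext v
      simp only [Subgraph.verts_top, Set.mem_univ, iff_true, Set.mem_setOf_eq]
      exact hall v
    · ext x y
      rw [Subgraph.top_adj]
      constructor
      · exact fun hadj => W.toSubgraph.adj_sub hadj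
      · intro hadj
        have hmem : ∀ a b : Fin ℓ, b = a + 1 → s(a, b) ∈ W.edges := by
          intro a b hb
          rw [hedges, List.mem_map]
          refine ⟨a.val, List.mem_range.mpr a.isLt, ?_⟩
          have e1 : ((a.val : ℕ) : Fin ℓ) = a := Fin.cast_val_eq_self a
          have e2 : ((a.val + 1 : ℕ) : Fin ℓ) = b := by
            rw [hb]; push_cast; rfl
          rw [e1, e2]
        have hsub : ∀ a b : Fin ℓ, b = a + 1 → W.toSubgraph.Adj a b := by
          intro a b hb
          have : s(a, b) ∈ W.toSubgraph.edgeSet := by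
            rw [Walk.edgeSet_toSubgraph]
            exact hmem a b hb
          exact Subgraph.mem_edgeSet.mp this
        rw [cycleGraph_adj'] at hadj
        have hone : ∀ c d : Fin ℓ, (c - d).val = 1 → c = d + 1 := by
          intro c d hcd
          have : c - d = 1 := by
            apply Fin.ext
            rw [hcd]
            show 1 = ((1 : ℕ) : Fin ℓ).val
            rw [Fin.val_natCast, Nat.mod_eq_of_lt (by omega)]
          have := sub_eq_iff_eq_add.mp this
          rw [this]; ring
        rcases hadj with h1 | h1
        · have hx : x = y + 1 := hone x y h1
          have := hsub y x hx
          exact this.symm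
        · exact hsub x y (hone y x h1)
  -- σ is injective
  have hinj : Function.Injective σ := by
    intro a b hab
    by_contra hne
    set Wr := W.rotate a (hall a) with hWr
    have hWrlen : Wr.length = ℓ := by
      have hts := congrArg Walk.length (W.take_spec (hall a))
      rw [Walk.length_append] at hts
      rw [hWr, Walk.rotate, Walk.length_append]
      omega
    have hbWr : b ∈ Wr.support := by
      rw [← Walk.mem_verts_toSubgraph, hWr, Walk.toSubgraph_rotate,
        Walk.mem_verts_toSubgraph]
      exact hall b
    set P1 := Wr.takeUntil b hbWr with hP1
    set P2 := Wr.dropUntil b hbWr with hP2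
    have hsum : P1.length + P2.length = ℓ := by
      have h3 := congrArg Walk.length (Wr.take_spec hbWr)
      rw [Walk.length_append] at h3
      rw [hP1, hP2]
      omega
    have hP1pos : 1 ≤ P1.length := by
      rcases Nat.eq_zero_or_pos P1.length with h0 | h0
      · exact absurd (Walk.eq_of_length_eq_zero h0) hne
      · exact h0
    have hP2pos : 1 ≤ P2.length := by
      rcases Nat.eq_zero_or_pos P2.length with h0 | h0
      · exact absurd (Walk.eq_of_length_eq_zero h0).symm hne
      · exact h0
    set m1 : H.Walk (σ a) (σ a) := (P1.map σ).copy rfl hab.symm with hm1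
    set m2 : H.Walk (σ a) (σ a) := (P2.map σ).copy hab.symm rfl with hm2
    have hm1len : m1.length = P1.length := by rw [hm1, Walk.length_copy, Walk.length_map]
    have hm2len : m2.length = P2.length := by rw [hm2, Walk.length_copy, Walk.length_map]
    have hlodd : ℓ % 2 = 1 := Nat.odd_iff.mp hodd
    have hdisj : m1.length % 2 = 1 ∨ m2.length % 2 = 1 := by omega
    rcases hdisj with ho | ho
    · obtain ⟨v', c, hc, hco, hcle⟩ :=
        aux_exists_odd_cycle m1.length (σ a) m1 rfl (Nat.odd_iff.mpr ho)
      have := hmin v' c hc hco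
      omega
    · obtain ⟨v', c, hc, hco, hcle⟩ :=
        aux_exists_odd_cycle m2.length (σ a) m2 rfl (Nat.odd_iff.mpr ho)
      have := hmin v' c hc hco
      omega
  refine ⟨σ 0, W.map σ, hWcyc.map hinj, ?_, ?_⟩
  · rw [Walk.length_map, hWlen]
  · rw [Walk.toSubgraph_map, hWtop]
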